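/- arXiv:2108.03268 — 5 statements merged into one kernel-verified Lean document; each statement's English description precedes it below -/
import Mathlib

section
/- The infinite series Σ_{k=1}^{∞} (∏_{i=1}^{k}(p_i - 1)) / ((p_k - 1) · ∏_{i=1}^{k} p_i), where p_i is the i-th prime, converges to 1. Equivalently, 1/2 + 1/6 + 2/30 + 8/210 + 48/2310 + ... = 1. -/
open Filter Finset Topology

/-- `p i` is the `i`-th prime (1-indexed: `p 1 = 2`). -/
noncomputable def p (i : ℕ) : ℕ := Nat.nth Nat.Prime (i - 1)

lemma p_prime (i : ℕ) : (p i).Prime := Nat.prime_nth_prime _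

lemma two_le_p (i : ℕ) : (2 : ℝ) ≤ (p i : ℝ) := by
  exact_mod_cast (p_prime i).two_le

noncomputable def A (n : ℕ) : ℝ := ∏ i ∈ Finset.Icc 1 n, (((p i : ℝ) - 1) / (p i : ℝ))

lemma A_nonneg (n : ℕ) : 0 ≤ A n := by
  apply Finset.prod_nonneg
  intro i _
  have := two_le_p i
  exact div_nonneg (by linarith) (by linarith)

lemma partial_sum_eq (n : ℕ) :
    ∑ k ∈ Finset.Icc 1 n,
        (∏ i ∈ Finset.Icc 1 k, ((p i : ℝ) - 1)) /
          (((p k : ℝ) - 1) * ∏ i ∈ Finset.Icc 1 k, (p i : ℝ)) = 1 - A n := by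
  induction n with
  | zero => simp [A]
  | succ n ih =>
    have hI : Finset.Icc 1 (n + 1) = insert (n + 1) (Finset.Icc 1 n) := by
      ext x; simp [Finset.mem_Icc]; omega
    rw [hI, Finset.sum_insert (by simp), ih]
    have hterm :
        (∏ i ∈ Finset.Icc 1 (n+1), ((p i : ℝ) - 1)) /
          (((p (n+1) : ℝ) - 1) * ∏ i ∈ Finset.Icc 1 (n+1), (p i : ℝ))
        = A n - A (n + 1) := by
      rw [hI, Finset.prod_insert (by simp), Finset.prod_insert (by simp)]
      have hA : A (n + 1) = ((p (n+1) : ℝ) - 1) / (p (n+1) : ℝ) * A n := by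
        rw [A, hI, Finset.prod_insert (by simp)]; rfl
      rw [hA, A, Finset.prod_div_distrib]
      have h1 : (p (n+1) : ℝ) ≠ 0 := by have := two_le_p (n+1); linarith
      have h2 : (p (n+1) : ℝ) - 1 ≠ 0 := by have := two_le_p (n+1); linarith
      have h3 : ∀ i ∈ Finset.Icc 1 n, (p i : ℝ) ≠ 0 := by
        intro i _; have := two_le_p i; linarith
      have h4 : (∏ i ∈ Finset.Icc 1 n, (p i : ℝ)) ≠ 0 :=
        Finset.prod_ne_zero_iff.mpr h3
      field_simp
      ring
    rw [hterm]; ring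

lemma sum_inv_p_tendsto :
    Tendsto (fun n : ℕ => ∑ k ∈ Finset.Icc 1 n, (1 / (p k : ℝ))) atTop atTop := by
  have hinf : (setOf Nat.Prime).Infinite := Nat.infinite_setOf_prime
  have hnotsum : ¬ Summable (fun j : ℕ => (1 / (Nat.nth Nat.Prime j : ℝ))) := by
    intro hs
    apply Nat.Primes.not_summable_one_div
    let e : ℕ ≃ Nat.Primes :=
      Equiv.ofBijective (fun j => ⟨Nat.nth Nat.Prime j, Nat.prime_nth_prime j⟩)
        ⟨fun a b hab => Nat.nth_injective hinf (by simpa using congrArg Subtype.val hab),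
         fun q => ⟨Nat.count Nat.Prime q, Subtype.ext (Nat.nth_count q.2)⟩⟩
    have hcomp : Summable ((fun q : Nat.Primes => (1 / (q : ℝ))) ∘ e) := by
      have : ((fun q : Nat.Primes => (1 / (q : ℝ))) ∘ e)
          = fun j : ℕ => (1 / (Nat.nth Nat.Prime j : ℝ)) := by
        funext j; rfl
      rw [this]; exact hs
    exact e.summable_iff.mp hcomp
  have htend := (not_summable_iff_tendsto_nat_atTop_of_nonneg
    (f := fun j : ℕ => (1 / (Nat.nth Nat.Prime j : ℝ)))
    (fun j => by positivity)).mp hnotsum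
  have heq : ∀ n : ℕ, ∑ k ∈ Finset.Icc 1 n, (1 / (p k : ℝ))
      = ∑ j ∈ Finset.range n, (1 / (Nat.nth Nat.Prime j : ℝ)) := by
    intro n
    rw [← Finset.Ico_add_one_right_eq_Icc, Finset.sum_Ico_eq_sum_range]
    simp [p]
  exact htend.congr fun n => (heq n).symm

lemma A_tendsto_zero : Tendsto A atTop (𝓝 0) := by
  have hbound : ∀ n, A n ≤ Real.exp (-(∑ k ∈ Finset.Icc 1 n, (1 / (p k : ℝ)))) := by
    intro n
    calc A n ≤ ∏ i ∈ Finset.Icc 1 n, Real.exp (-(1 / (p i : ℝ))) := by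
          apply Finset.prod_le_prod
          · intro i _; have := two_le_p i
            exact div_nonneg (by linarith) (by linarith)
          · intro i _
            have h1 : (p i : ℝ) ≠ 0 := by have := two_le_p i; linarith
            have : ((p i : ℝ) - 1) / (p i : ℝ) = 1 + (-(1 / (p i : ℝ))) := by
              field_simp; ring
            rw [this]
            linarith [Real.add_one_le_exp (-(1 / (p i : ℝ)))]
      _ = Real.exp (∑ i ∈ Finset.Icc 1 n, -(1 / (p i : ℝ))) := (Real.exp_sum _ _).symm
      _ = Real.exp (-(∑ k ∈ Finset.Icc 1 n, (1 / (p k : ℝ)))) := by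
          rw [Finset.sum_neg_distrib]
  have hexp : Tendsto (fun n => Real.exp (-(∑ k ∈ Finset.Icc 1 n, (1 / (p k : ℝ)))))
      atTop (𝓝 0) :=
    Real.tendsto_exp_atBot.comp (tendsto_neg_atBot_iff.mpr sum_inv_p_tendsto)
  exact squeeze_zero A_nonneg hbound hexp

theorem stmt_1 :
    Tendsto (fun n : ℕ => ∑ k ∈ Finset.Icc 1 n,
        (∏ i ∈ Finset.Icc 1 k, ((p i : ℝ) - 1)) /
          (((p k : ℝ) - 1) * ∏ i ∈ Finset.Icc 1 k, (p i : ℝ)))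
      atTop (𝓝 1) := by
  simp only [partial_sum_eq]
  have h := (tendsto_const_nhds (x := (1:ℝ)) (f := atTop)).sub A_tendsto_zero
  simpa using h
end

section
/- The n-th term T_n = (∏_{i=1}^{n}(p_i - 1)) / ((p_n - 1) · ∏_{i=1}^{n} p_i) satisfies the recursive relation T_n = (1 - S_n)/(p_n - 1), where S_n is the n-th partial sum of the series. -/
open Filter Finset Topology

lemma p_two_le (i : ℕ) : (2 : ℚ) ≤ (p i : ℚ) := by
  have h := (Nat.prime_nth_prime (i - 1)).two_le
  exact_mod_cast h

lemma p_ne_zero (i : ℕ) : (p i : ℚ) ≠ 0 := by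
  have := p_two_le i; intro h; rw [h] at this; linarith

lemma p_sub_one_ne_zero (i : ℕ) : (p i : ℚ) - 1 ≠ 0 := by
  have := p_two_le i; intro h; nlinarith

lemma prod_p_ne_zero (n : ℕ) : (∏ i ∈ Finset.Icc 1 n, (p i : ℚ)) ≠ 0 :=
  Finset.prod_ne_zero_iff.mpr fun i _ => p_ne_zero i

lemma key : ∀ n : ℕ, 1 ≤ n →
    (∑ k ∈ Finset.Icc 1 n,
        (∏ i ∈ Finset.Icc 1 k, ((p i : ℚ) - 1)) /
          (((p k : ℚ) - 1) * ∏ i ∈ Finset.Icc 1 k, (p i : ℚ))) =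
      1 - (∏ i ∈ Finset.Icc 1 n, ((p i : ℚ) - 1)) / (∏ i ∈ Finset.Icc 1 n, (p i : ℚ)) := by
  intro n hn
  induction n with
  | zero => omega
  | succ m ih =>
    rcases Nat.eq_or_lt_of_le hn with h | h
    · have hm0 : m = 0 := by omega
      subst hm0
      simp only [Finset.Icc_self, Finset.sum_singleton, Finset.prod_singleton]
      have h2 := p_ne_zero 1
      have h3 := p_sub_one_ne_zero 1
      field_simp
      ring
    · have hm : 1 ≤ m := by omega
      rw [Finset.sum_Icc_succ_top (by omega : 1 ≤ m + 1), ih hm,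
        Finset.prod_Icc_succ_top (by omega : 1 ≤ m + 1),
        Finset.prod_Icc_succ_top (by omega : 1 ≤ m + 1)]
      have h1 := prod_p_ne_zero m
      have h2 := p_ne_zero (m + 1)
      have h3 := p_sub_one_ne_zero (m + 1)
      field_simp
      ring

theorem stmt_2 (n : ℕ) (hn : 1 ≤ n) :
    (∏ i ∈ Finset.Icc 1 n, ((p i : ℚ) - 1)) /
        (((p n : ℚ) - 1) * ∏ i ∈ Finset.Icc 1 n, (p i : ℚ)) =
      (1 - ∑ k ∈ Finset.Icc 1 n,
          (∏ i ∈ Finset.Icc 1 k, ((p i : ℚ) - 1)) /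
            (((p k : ℚ) - 1) * ∏ i ∈ Finset.Icc 1 k, (p i : ℚ))) /
        ((p n : ℚ) - 1) := by
  rw [key n hn]
  rw [sub_sub_cancel, div_div, mul_comm]
end

section
/- The product ∏_{i=1}^{n} (1 - 1/p_i) over the first n primes tends to 0 as n → ∞. -/
open Filter Finset Topology

lemma not_summable_nth_prime :
    ¬ Summable (fun j : ℕ => 1 / (Nat.nth Nat.Prime j : ℝ)) := by
  have hinf : {n : ℕ | n.Prime}.Infinite := Nat.infinite_setOf_prime
  let e : ℕ ≃ Nat.Primes :=
    (@Nat.Subtype.orderIsoOfNat {n : ℕ | n.Prime} hinf.to_subtype).toEquiv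
  intro h
  apply Nat.Primes.not_summable_one_div
  have he : (fun q : Nat.Primes => (1 / q : ℝ)) ∘ e
      = fun j : ℕ => 1 / (Nat.nth Nat.Prime j : ℝ) := by
    funext j
    simp only [Function.comp_apply]
    congr 1
    exact_mod_cast congrFun (Nat.nth_eq_orderIsoOfNat hinf).symm j
  exact (Equiv.summable_iff e).mp (he ▸ h)

lemma sums_tendsto :
    Tendsto (fun n : ℕ => ∑ j ∈ range n, 1 / (Nat.nth Nat.Prime j : ℝ)) atTop atTop := by
  refine (not_summable_iff_tendsto_nat_atTop_of_nonneg (fun j => ?_)).mp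
    not_summable_nth_prime
  positivity

theorem stmt_3 :
    Tendsto (fun n : ℕ => ∏ i ∈ Finset.Icc 1 n, (1 - 1 / (p i : ℝ)))
      atTop (𝓝 0) := by
  have hfac : ∀ j : ℕ, (0:ℝ) ≤ 1 - 1 / (Nat.nth Nat.Prime j : ℝ) := by
    intro j
    have h2 : 2 ≤ Nat.nth Nat.Prime j := (Nat.prime_nth_prime j).two_le
    have : (1:ℝ) / (Nat.nth Nat.Prime j : ℝ) ≤ 1 := by
      rw [div_le_one (by exact_mod_cast Nat.lt_of_lt_of_le Nat.zero_lt_two h2)]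
      exact_mod_cast Nat.le_of_lt (Nat.lt_of_lt_of_le Nat.one_lt_two h2)
    linarith
  have hre : ∀ n : ℕ, ∏ i ∈ Finset.Icc 1 n, (1 - 1 / (p i : ℝ))
      = ∏ j ∈ range n, (1 - 1 / (Nat.nth Nat.Prime j : ℝ)) := by
    intro n
    rw [← Finset.Ico_add_one_right_eq_Icc, Finset.prod_Ico_eq_prod_range]
    simp [p]
  have hub : ∀ n : ℕ, ∏ j ∈ range n, (1 - 1 / (Nat.nth Nat.Prime j : ℝ))
      ≤ Real.exp (-(∑ j ∈ range n, 1 / (Nat.nth Nat.Prime j : ℝ))) := by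
    intro n
    calc ∏ j ∈ range n, (1 - 1 / (Nat.nth Nat.Prime j : ℝ))
        ≤ ∏ j ∈ range n, Real.exp (-(1 / (Nat.nth Nat.Prime j : ℝ))) := by
          refine Finset.prod_le_prod (fun j _ => hfac j) (fun j _ => ?_)
          have := Real.add_one_le_exp (-(1 / (Nat.nth Nat.Prime j : ℝ)))
          linarith
      _ = Real.exp (-(∑ j ∈ range n, 1 / (Nat.nth Nat.Prime j : ℝ))) := by
          rw [← Real.exp_sum, Finset.sum_neg_distrib]
  simp only [hre]
  refine squeeze_zero (fun n => Finset.prod_nonneg fun j _ => hfac j) hub ?_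
  exact Real.tendsto_exp_atBot.comp (tendsto_neg_atTop_atBot.comp sums_tendsto)
end

section
/- The infinite series Σ_{k=2}^{∞} (∏_{i=2}^{k}(p_i - 2)) / ((p_k - 2) · ∏_{i=2}^{k} p_i), over the odd primes p_i (i-th prime, i ≥ 2), converges to 1/2. Equivalently, 1/3 + 1/15 + 3/105 + 15/1155 + ... = 1/2. -/
open Filter Finset Topology

lemma nth_not_summable : ¬ Summable (fun n : ℕ => (1 : ℝ) / (Nat.nth Nat.Prime n : ℝ)) := by
  have hinf : {n | Nat.Prime n}.Infinite := Nat.infinite_setOf_prime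
  let e : ℕ ≃ Nat.Primes :=
    Equiv.ofBijective (fun n => ⟨Nat.nth Nat.Prime n, Nat.nth_mem_of_infinite hinf n⟩)
      ⟨fun a b h => Nat.nth_injective hinf (congrArg Subtype.val h),
       fun q => by
         obtain ⟨n, hn⟩ := Nat.subset_range_nth q.2
         exact ⟨n, Subtype.ext hn⟩⟩
  intro h
  exact Nat.Primes.not_summable_one_div (e.summable_iff.mp (by exact h))

lemma p_prime_s8 {i : ℕ} (hi : 2 ≤ i) : Nat.Prime (p i) :=
  Nat.nth_mem_of_infinite Nat.infinite_setOf_prime _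

lemma p_ge_three {i : ℕ} (hi : 2 ≤ i) : 3 ≤ p i := by
  have hprime := p_prime_s8 hi
  have hne : p i ≠ 2 := by
    intro h
    have h2 : Nat.nth Nat.Prime 0 = 2 := by
      have := Nat.nth_count (p := Nat.Prime) Nat.prime_two
      simpa [Nat.count_succ] using this
    have := Nat.nth_injective Nat.infinite_setOf_prime (p := Nat.Prime)
      (a₁ := i - 1) (a₂ := 0) (by rw [h2]; exact h)
    omega
  have := hprime.two_le
  omega

noncomputable def Q (n : ℕ) : ℝ := ∏ i ∈ Finset.Icc 2 n, (1 - 2 / (p i : ℝ))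

lemma Q_nonneg (n : ℕ) : 0 ≤ Q n := by
  apply Finset.prod_nonneg
  intro i hi
  have h3 : (3 : ℝ) ≤ (p i : ℝ) := by exact_mod_cast p_ge_three (Finset.mem_Icc.mp hi).1
  have : 2 / (p i : ℝ) ≤ 1 := by
    rw [div_le_one (by linarith)]; linarith
  linarith

lemma Q_le_exp (n : ℕ) : Q n ≤ Real.exp (-(∑ i ∈ Finset.Icc 2 n, 2 / (p i : ℝ))) := by
  rw [← Finset.sum_neg_distrib, Real.exp_sum]
  apply Finset.prod_le_prod
  · intro i hi
    have h3 : (3 : ℝ) ≤ (p i : ℝ) := by exact_mod_cast p_ge_three (Finset.mem_Icc.mp hi).1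
    have : 2 / (p i : ℝ) ≤ 1 := by rw [div_le_one (by linarith)]; linarith
    linarith
  · intro i hi
    have := Real.add_one_le_exp (-(2 / (p i : ℝ)))
    linarith

lemma sum_eq (n : ℕ) :
    (∑ k ∈ Finset.Icc 2 n,
        (∏ i ∈ Finset.Icc 2 k, ((p i : ℝ) - 2)) /
          (((p k : ℝ) - 2) * ∏ i ∈ Finset.Icc 2 k, (p i : ℝ))) = (1 - Q n) / 2 := by
  induction n with
  | zero => simp [Q]
  | succ n ih =>
    rcases Nat.lt_or_ge n 1 with hn | hn
    · interval_cases n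
      simp [Q]
    · have h2 : 2 ≤ n + 1 := by omega
      rw [Finset.sum_Icc_succ_top h2, ih]
      have hQ : Q (n + 1) = Q n * (1 - 2 / (p (n+1) : ℝ)) := by
        rw [Q, Q, Finset.prod_Icc_succ_top h2]
      have h3 : (3 : ℝ) ≤ (p (n+1) : ℝ) := by exact_mod_cast p_ge_three h2
      have hterm : (∏ i ∈ Finset.Icc 2 (n+1), ((p i : ℝ) - 2)) /
          (((p (n+1) : ℝ) - 2) * ∏ i ∈ Finset.Icc 2 (n+1), (p i : ℝ))
          = Q (n+1) / ((p (n+1) : ℝ) - 2) := by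
        rw [Q]
        have : ∏ i ∈ Finset.Icc 2 (n+1), (1 - 2 / (p i : ℝ))
            = (∏ i ∈ Finset.Icc 2 (n+1), ((p i : ℝ) - 2)) /
              (∏ i ∈ Finset.Icc 2 (n+1), (p i : ℝ)) := by
          rw [← Finset.prod_div_distrib]
          apply Finset.prod_congr rfl
          intro i hi
          have h3i : (3 : ℝ) ≤ (p i : ℝ) := by
            exact_mod_cast p_ge_three (Finset.mem_Icc.mp hi).1
          field_simp
        rw [this]
        field_simp
      rw [hterm, hQ]
      have hne1 : (p (n+1) : ℝ) ≠ 0 := by linarith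
      have hne2 : (p (n+1) : ℝ) - 2 ≠ 0 := by linarith
      field_simp
      ring

lemma sum_tendsto : Tendsto (fun n => ∑ i ∈ Finset.Icc 2 n, 2 / (p i : ℝ)) atTop atTop := by
  set g : ℕ → ℝ := fun j => (1 : ℝ) / (Nat.nth Nat.Prime j : ℝ) with hg
  have hns : ¬ Summable (fun j => g (j + 1)) := by
    intro h
    exact nth_not_summable ((summable_nat_add_iff 1).mp h)
  have hnn : ∀ j, 0 ≤ g (j + 1) := fun j => by positivity
  have hR : Tendsto (fun n => ∑ j ∈ Finset.range n, g (j + 1)) atTop atTop :=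
    (not_summable_iff_tendsto_nat_atTop_of_nonneg hnn).mp hns
  have hR2 : Tendsto (fun n => 2 * ∑ j ∈ Finset.range n, g (j + 1)) atTop atTop :=
    hR.const_mul_atTop two_pos
  have key : ∀ n : ℕ, ∑ i ∈ Finset.Icc 2 n, 2 / (p i : ℝ)
      = 2 * ∑ j ∈ Finset.range (n - 1), g (j + 1) := by
    intro n
    rw [show Finset.Icc 2 n = Finset.Ico 2 (n+1) by rw [Finset.Ico_add_one_right_eq_Icc],
      Finset.sum_Ico_eq_sum_range, Finset.mul_sum]
    have : n + 1 - 2 = n - 1 := by omega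
    rw [this]
    apply Finset.sum_congr rfl
    intro j _
    have : p (2 + j) = Nat.nth Nat.Prime (j + 1) := by
      simp [p]; congr 1; omega
    rw [this, hg]
    ring
  simp only [key]
  exact hR2.comp (tendsto_sub_atTop_nat 1)

theorem stmt_8 :
    Tendsto (fun n : ℕ => ∑ k ∈ Finset.Icc 2 n,
        (∏ i ∈ Finset.Icc 2 k, ((p i : ℝ) - 2)) /
          (((p k : ℝ) - 2) * ∏ i ∈ Finset.Icc 2 k, (p i : ℝ)))
      atTop (𝓝 (1 / 2)) := by
  have hQ0 : Tendsto Q atTop (𝓝 0) := by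
    apply squeeze_zero Q_nonneg Q_le_exp
    exact Real.tendsto_exp_neg_atTop_nhds_zero.comp sum_tendsto
  simp only [sum_eq]
  have : Tendsto (fun n => (1 - Q n) / 2) atTop (𝓝 ((1 - 0) / 2)) :=
    ((tendsto_const_nhds.sub hQ0)).div_const 2
  simpa using this
end

section
/- Assume the sum of reciprocals of twin primes converges (Brun's theorem), i.e., Σ 1/q over all primes q such that q or q−2 (with q odd) is a member of a twin prime pair converges. Then the series Σ_{k=1}^{∞} (∏_{i=1}^{k}(q_i − 1)) / ((q_k − 1) · ∏_{i=1}^{k} q_i), where (q_i) enumerates the twin-prime sequence 3, 5, 5, 7, 11, 13, 17, 19, ..., converges. -/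
open Filter Finset Topology

/-- The `j`-th (0-indexed) lower member of a twin prime pair: 3, 5, 11, 17, 29, ... -/
noncomputable def lowerTwin (j : ℕ) : ℕ :=
  Nat.nth (fun q => q.Prime ∧ (q + 2).Prime) j

/-- The sequence listing all members of twin prime pairs with multiplicity:
3, 5, 5, 7, 11, 13, 17, 19, 29, 31, ... (0-indexed). -/
noncomputable def q (i : ℕ) : ℕ :=
  if i % 2 = 0 then lowerTwin (i / 2) else lowerTwin (i / 2) + 2

lemma q_ge_two (brun : Summable fun i => 1 / (q i : ℝ)) : ∀ i, 2 ≤ q i := by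
  have hinf : {p : ℕ | p.Prime ∧ (p + 2).Prime}.Infinite := by
    by_contra h
    rw [Set.not_infinite] at h
    have h0 := brun.tendsto_atTop_zero
    obtain ⟨N, hN⟩ := Metric.tendsto_atTop.mp h0 (1/4) (by norm_num)
    set j := max N h.toFinset.card with hj
    have hq2 : q (2 * j + 1) = 2 := by
      unfold q lowerTwin
      have h1 : (2 * j + 1) % 2 = 1 := by omega
      have h2 : (2 * j + 1) / 2 = j := by omega
      rw [h1, h2]
      simp only [if_neg (by norm_num : ¬ (1 = 0))]
      have : Nat.nth (fun q => q.Prime ∧ (q + 2).Prime) j = 0 := by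
        rw [Nat.nth_eq_zero]
        exact Or.inr ⟨h, le_max_right _ _⟩
      omega
    have := hN (2 * j + 1) (by omega)
    rw [hq2] at this
    norm_num [Real.dist_eq] at this
  intro i
  unfold q lowerTwin
  have hm := Nat.nth_mem_of_infinite hinf (i / 2)
  split
  · exact hm.1.two_le
  · omega

theorem stmt_15 (brun : Summable fun i => 1 / (q i : ℝ)) :
    ∃ L : ℝ, Tendsto (fun n : ℕ => ∑ k ∈ Finset.range n,
        (∏ i ∈ Finset.range (k + 1), ((q i : ℝ) - 1)) /
          (((q k : ℝ) - 1) * ∏ i ∈ Finset.range (k + 1), (q i : ℝ)))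
      atTop (𝓝 L) := by
  have h2 : ∀ i, (2 : ℝ) ≤ (q i : ℝ) := fun i => by exact_mod_cast q_ge_two brun i
  have hpos : ∀ i, (0 : ℝ) < (q i : ℝ) := fun i => lt_of_lt_of_le (by norm_num) (h2 i)
  have h1 : ∀ i, (0 : ℝ) < (q i : ℝ) - 1 := fun i => by linarith [h2 i]
  set f : ℕ → ℝ := fun k =>
    (∏ i ∈ Finset.range (k + 1), ((q i : ℝ) - 1)) /
      (((q k : ℝ) - 1) * ∏ i ∈ Finset.range (k + 1), (q i : ℝ)) with hf
  have hsum : Summable f := by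
    apply Summable.of_nonneg_of_le _ _ brun
    · intro k
      apply div_nonneg
      · exact Finset.prod_nonneg fun i _ => le_of_lt (h1 i)
      · exact le_of_lt (mul_pos (h1 k) (Finset.prod_pos fun i _ => hpos i))
    · intro k
      rw [hf]
      simp only
      rw [Finset.prod_range_succ, Finset.prod_range_succ]
      have hQpos : (0 : ℝ) < ∏ i ∈ Finset.range k, (q i : ℝ) :=
        Finset.prod_pos fun i _ => hpos i
      rw [show (∏ i ∈ Finset.range k, ((q i : ℝ) - 1)) * ((q k : ℝ) - 1) /
          (((q k : ℝ) - 1) * ((∏ i ∈ Finset.range k, (q i : ℝ)) * (q k : ℝ)))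
          = (∏ i ∈ Finset.range k, ((q i : ℝ) - 1)) /
            ((∏ i ∈ Finset.range k, (q i : ℝ)) * (q k : ℝ)) from by
        rw [mul_comm (∏ i ∈ Finset.range k, ((q i : ℝ) - 1)) _,
          mul_div_mul_left _ _ (ne_of_gt (h1 k))]]
      have hPQ : (∏ i ∈ Finset.range k, ((q i : ℝ) - 1)) ≤ ∏ i ∈ Finset.range k, (q i : ℝ) :=
        Finset.prod_le_prod (fun i _ => le_of_lt (h1 i)) (fun i _ => by linarith)
      calc (∏ i ∈ Finset.range k, ((q i : ℝ) - 1)) /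
            ((∏ i ∈ Finset.range k, (q i : ℝ)) * (q k : ℝ))
          ≤ (∏ i ∈ Finset.range k, (q i : ℝ)) /
            ((∏ i ∈ Finset.range k, (q i : ℝ)) * (q k : ℝ)) := by
            exact div_le_div_of_nonneg_right hPQ (le_of_lt (mul_pos hQpos (hpos k)))
          _ = 1 / (q k : ℝ) := by
            rw [div_mul_eq_div_div, div_self (ne_of_gt hQpos)]
  exact ⟨∑' k, f k, hsum.hasSum.tendsto_sum_nat⟩
end
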